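/- Let n, l be positive integers and p a prime such that p^l divides n but p^{l+1} does not divide n. A connected circulant graph Cay(Z_n, S) of degree p^l − 1 (i.e., |S| = p^l − 1) admits a perfect code if and only if s ≢ s′ (mod p^l) for all distinct s, s′ ∈ S ∪ {0}. -/

import Mathlib

open Polynomial

/-- The circulant graph `Cay(Z_n, S)`: vertices are `ZMod n`, and `u, v` are adjacent
iff `v - u ∈ S` (here symmetrised; when `S = -S` this agrees with the usual definition). -/
def circulantGraph (n : ℕ) (S : Finset (ZMod n)) : SimpleGraph (ZMod n) :=
  SimpleGraph.fromRel (fun u v => v - u ∈ S)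

/-- `C` is a perfect code in `G`: an independent set such that every vertex outside `C`
is adjacent to exactly one vertex of `C`. -/
def IsPerfectCode {V : Type*} (G : SimpleGraph V) (C : Set V) : Prop :=
  (∀ u ∈ C, ∀ v ∈ C, ¬ G.Adj u v) ∧ ∀ v, v ∉ C → ∃! c, c ∈ C ∧ G.Adj v c

/-- `C` is a total perfect code in `G`: every vertex is adjacent to exactly one vertex of `C`. -/
def IsTotalPerfectCode {V : Type*} (G : SimpleGraph V) (C : Set V) : Prop :=
  ∀ v, ∃! c, c ∈ C ∧ G.Adj v c

lemma aux_pow_mod (ζ : ℂ) (N : ℕ) (hζ : ζ ^ N = 1) (a : ℕ) : ζ ^ a = ζ ^ (a % N) := by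
  conv_lhs => rw [← Nat.div_add_mod a N]
  rw [pow_add, pow_mul, hζ, one_pow, one_mul]

lemma aux_geom (n : ℕ) (ζ : ℂ) (hζ : ζ ^ n = 1) (hζ1 : ζ ≠ 1) :
    ∑ k ∈ Finset.range n, ζ ^ k = 0 := by
  have h := geom_sum_mul ζ n
  rw [hζ, sub_self] at h
  rcases mul_eq_zero.mp h with h' | h'
  · exact h'
  · exact absurd (sub_eq_zero.mp h') hζ1

lemma aux_code_sum_ne_zero {α : Type*} (p l : ℕ) (hp : p.Prime)
    (T : Finset α) (e : α → ℕ) (ζ : ℂ) (hζ : ζ ^ p ^ l = 1) (hζ1 : ζ ≠ 1)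
    (hcard : ¬ (p ∣ T.card)) : ∑ c ∈ T, ζ ^ (e c) ≠ 0 := by
  intro h0
  haveI : Fact p.Prime := ⟨hp⟩
  have hNpos : 0 < p ^ l := pow_pos hp.pos l
  have hfin : IsOfFinOrder ζ := isOfFinOrder_iff_pow_eq_one.mpr ⟨p ^ l, hNpos, hζ⟩
  set d := orderOf ζ with hd
  have hprim : IsPrimitiveRoot ζ d := IsPrimitiveRoot.orderOf ζ
  have hdpos : 0 < d := hfin.orderOf_pos
  have hddvd : d ∣ p ^ l := orderOf_dvd_of_pow_eq_one hζ
  have hd1 : d ≠ 1 := fun h => hζ1 (orderOf_eq_one_iff.mp h)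
  obtain ⟨j, hjl, hdj⟩ := (Nat.dvd_prime_pow hp).mp hddvd
  have hj0 : j ≠ 0 := by rintro rfl; simp at hdj; exact hd1 hdj
  obtain ⟨j', rfl⟩ := Nat.exists_eq_succ_of_ne_zero hj0
  set Q : ℤ[X] := ∑ c ∈ T, X ^ (e c) with hQ
  have hint : IsIntegral ℤ ζ := ⟨X ^ p ^ l - C 1, monic_X_pow_sub_C 1 hNpos.ne', by simp [hζ]⟩
  have hmin : cyclotomic d ℤ = minpoly ℤ ζ := Polynomial.cyclotomic_eq_minpoly hprim hdpos
  have hQ0 : aeval ζ Q = 0 := by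
    rw [hQ, map_sum]; simpa using h0
  have hdvdQ : cyclotomic d ℤ ∣ Q := hmin ▸ minpoly.isIntegrallyClosed_dvd hint hQ0
  have hev := Polynomial.eval_dvd (x := (1 : ℤ)) hdvdQ
  rw [hdj, Polynomial.eval_one_cyclotomic_prime_pow] at hev
  have hev1 : Q.eval 1 = (T.card : ℤ) := by
    rw [hQ, Polynomial.eval_finset_sum]; simp
  rw [hev1] at hev
  exact hcard (Int.natCast_dvd_natCast.mp hev)


/-- **Theorem 1.2.** Let `n, l` be positive integers and `p` a prime with `p^l ∣ n` but
`p^(l+1) ∤ n`. A connected circulant graph `Cay(Z_n, S)` of degree `p^l - 1` admits a perfect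
code iff `s ≢ s' (mod p^l)` for distinct `s, s' ∈ S ∪ {0}`. -/
theorem circulant_perfectCode_iff_of_degree_primePow_pred
    (n l : ℕ) (hn : 0 < n) (hl : 0 < l) (p : ℕ) (hp : p.Prime)
    (hdvd : p ^ l ∣ n) (hndvd : ¬ p ^ (l + 1) ∣ n)
    (S : Finset (ZMod n)) (h0S : (0 : ZMod n) ∉ S) (hSneg : ∀ s ∈ S, -s ∈ S)
    (hcard : S.card = p ^ l - 1) (hconn : (circulantGraph n S).Connected) :
    (∃ C : Set (ZMod n), IsPerfectCode (circulantGraph n S) C) ↔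
      (∀ s ∈ insert (0 : ZMod n) S, ∀ s' ∈ insert (0 : ZMod n) S,
        s ≠ s' → ¬ (s.val ≡ s'.val [MOD p ^ l])) := by
  classical
  haveI : NeZero n := ⟨hn.ne'⟩
  have hNpos : 0 < p ^ l := pow_pos hp.pos l
  haveI : NeZero (p ^ l) := ⟨hNpos.ne'⟩
  set N := p ^ l with hNdef
  haveI : NeZero N := ⟨hNpos.ne'⟩
  set S₀ : Finset (ZMod n) := insert 0 S with hS₀def
  have hS₀card : S₀.card = N := by
    rw [hS₀def, Finset.card_insert_of_notMem h0S, hcard]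
    omega
  set g : ZMod n →+* ZMod N := ZMod.castHom hdvd (ZMod N) with hgdef
  have hgval : ∀ v : ZMod n, g v = (v.val : ZMod N) := fun v => by
    rw [hgdef, ZMod.castHom_apply, ZMod.natCast_val]
  have h0S₀ : (0 : ZMod n) ∈ S₀ := Finset.mem_insert_self 0 S
  have hmemS : ∀ {s : ZMod n}, s ∈ S₀ → s ≠ 0 → s ∈ S :=
    fun h hne => (Finset.mem_insert.mp h).resolve_left hne
  have hAdj : ∀ u v : ZMod n, (circulantGraph n S).Adj u v ↔ u ≠ v ∧ v - u ∈ S := by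
    intro u v
    rw [circulantGraph, SimpleGraph.fromRel_adj]
    constructor
    · rintro ⟨hne, h | h⟩
      · exact ⟨hne, h⟩
      · have := hSneg _ h; rw [neg_sub] at this; exact ⟨hne, this⟩
    · rintro ⟨hne, h⟩; exact ⟨hne, Or.inl h⟩
  constructor
  · rintro ⟨C, hC⟩
    -- unique decomposition
    have huniq : ∀ v : ZMod n, ∃! x : ZMod n × ZMod n, (x.1 ∈ C ∧ x.2 ∈ S₀) ∧ x.1 + x.2 = v := by
      intro v
      by_cases hvC : v ∈ C
      · refine ⟨(v, 0), ⟨⟨hvC, h0S₀⟩, add_zero v⟩, ?_⟩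
        rintro ⟨c, s⟩ ⟨⟨hc, hs⟩, hsum⟩
        simp only at hsum
        by_cases hs0 : s = 0
        · subst hs0; rw [add_zero] at hsum; subst hsum; rfl
        · exfalso
          have hsS : s ∈ S := hmemS hs hs0
          have hcv : c ≠ v := by rintro rfl; exact hs0 (by linear_combination hsum)
          have hvcs : v - c = s := by linear_combination -hsum
          exact hC.1 c hc v hvC ((hAdj c v).mpr ⟨hcv, hvcs ▸ hsS⟩)
      · obtain ⟨c, ⟨hcC, hadj⟩, hun⟩ := hC.2 v hvC
        obtain ⟨hne, hcv⟩ := (hAdj v c).mp hadj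
        have hvc : v - c ∈ S := by have := hSneg _ hcv; rwa [neg_sub] at this
        refine ⟨(c, v - c), ⟨⟨hcC, Finset.mem_insert_of_mem hvc⟩, by ring⟩, ?_⟩
        rintro ⟨c', s'⟩ ⟨⟨hc', hs'⟩, hsum⟩
        simp only at hsum
        have hs'0 : s' ≠ 0 := by
          rintro rfl; rw [add_zero] at hsum; exact hvC (hsum ▸ hc')
        have hs'S : s' ∈ S := hmemS hs' hs'0
        have hadj' : (circulantGraph n S).Adj v c' := by
          refine (hAdj v c').mpr ⟨?_, ?_⟩
          · intro h
            rw [← h] at hsum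
            exact hs'0 (by linear_combination hsum)
          · have : c' - v = -s' := by linear_combination hsum
            rw [this]; exact hSneg _ hs'S
        have hc'c : c' = c := hun c' ⟨hc', hadj'⟩
        have hs'v : s' = v - c := by rw [← hc'c]; linear_combination hsum
        rw [hc'c, hs'v]
    set C' : Finset (ZMod n) := (Set.toFinite C).toFinset with hC'def
    have hC'mem : ∀ x, x ∈ C' ↔ x ∈ C := fun x => Set.Finite.mem_toFinset _
    have hmemP : ∀ x : ZMod n × ZMod n, x ∈ C' ×ˢ S₀ ↔ x.1 ∈ C ∧ x.2 ∈ S₀ := by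
      intro x; rw [Finset.mem_product, hC'mem]
    -- sum transport
    have hsum : ∀ F : ZMod n → ℂ,
        ∑ x ∈ C' ×ˢ S₀, F (x.1 + x.2) = ∑ v : ZMod n, F v := by
      intro F
      refine Finset.sum_bij (fun x _ => x.1 + x.2) (fun a _ => Finset.mem_univ _) ?_ ?_
        (fun a _ => rfl)
      · intro a₁ ha₁ a₂ ha₂ h
        obtain ⟨x, _, hx⟩ := huniq (a₁.1 + a₁.2)
        exact (hx a₁ ⟨(hmemP a₁).mp ha₁, rfl⟩).trans (hx a₂ ⟨(hmemP a₂).mp ha₂, h.symm⟩).symm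
      · intro v _
        obtain ⟨x, ⟨hx1, hx2⟩, _⟩ := huniq v
        exact ⟨x, (hmemP x).mpr hx1, hx2⟩
    have hcard' : C'.card * N = n := by
      have h := Finset.card_bij (s := C' ×ˢ S₀) (t := (Finset.univ : Finset (ZMod n)))
        (fun x _ => x.1 + x.2) (fun a _ => Finset.mem_univ _)
        (by
          intro a₁ ha₁ a₂ ha₂ h
          obtain ⟨x, _, hx⟩ := huniq (a₁.1 + a₁.2)
          exact (hx a₁ ⟨(hmemP a₁).mp ha₁, rfl⟩).trans (hx a₂ ⟨(hmemP a₂).mp ha₂, h.symm⟩).symm)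
        (by
          intro v _
          obtain ⟨x, ⟨hx1, hx2⟩, _⟩ := huniq v
          exact ⟨x, (hmemP x).mpr hx1, hx2⟩)
      rwa [Finset.card_product, hS₀card, Finset.card_univ, ZMod.card] at h
    have hpC : ¬ p ∣ C'.card := by
      intro hpc
      obtain ⟨k, hk⟩ := hpc
      exact hndvd ⟨k, by rw [← hcard', hk, hNdef]; ring⟩
    -- character identities
    have hA : ∀ ζ : ℂ, ζ ^ N = 1 →
        (∑ c ∈ C', ζ ^ (g c).val) * (∑ s ∈ S₀, ζ ^ (g s).val) = ∑ v : ZMod n, ζ ^ (g v).val := by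
      intro ζ hζ
      rw [Finset.sum_mul_sum, ← Finset.sum_product']
      rw [← hsum (fun v => ζ ^ (g v).val)]
      refine Finset.sum_congr rfl fun x _ => ?_
      have hval : (g (x.1 + x.2)).val = ((g x.1).val + (g x.2).val) % N := by
        rw [map_add, ZMod.val_add]
      rw [← pow_add, aux_pow_mod ζ N hζ ((g x.1).val + (g x.2).val), ← hval]
    have hB : ∀ ζ : ℂ, ζ ^ N = 1 → ζ ≠ 1 → ∑ v : ZMod n, ζ ^ (g v).val = 0 := by
      intro ζ hζ hζ1
      have hζn : ζ ^ n = 1 := by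
        obtain ⟨m, hm⟩ := hdvd
        rw [hm, pow_mul]
        rw [hNdef] at hζ
        rw [hζ, one_pow]
      have step1 : ∑ v : ZMod n, ζ ^ (g v).val = ∑ k ∈ Finset.range n, ζ ^ k := by
        refine Finset.sum_bij (fun v _ => v.val) (fun v _ => Finset.mem_range.mpr (ZMod.val_lt v))
          ?_ ?_ ?_
        · intro a₁ _ a₂ _ h
          have := congrArg (fun m : ℕ => (m : ZMod n)) h
          simpa [ZMod.natCast_val, ZMod.cast_id] using this
        · intro k hk
          refine ⟨(k : ZMod n), Finset.mem_univ _, ?_⟩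
          show ((k : ZMod n)).val = k
          rw [ZMod.val_natCast, Nat.mod_eq_of_lt (Finset.mem_range.mp hk)]
        · intro v _
          show ζ ^ (g v).val = ζ ^ v.val
          rw [hgval, ZMod.val_natCast, ← aux_pow_mod ζ N hζ]
      rw [step1]
      exact aux_geom n ζ hζn hζ1
    have hkey : ∀ ζ : ℂ, ζ ^ N = 1 → ζ ≠ 1 → ∑ s ∈ S₀, ζ ^ (g s).val = 0 := by
      intro ζ h1 h2
      have hA' := hA ζ h1
      rw [hB ζ h1 h2] at hA'
      rcases mul_eq_zero.mp hA' with h | h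
      · exact absurd h (aux_code_sum_ne_zero p l hp C' (fun c => (g c).val) ζ
          (by rw [← hNdef]; exact h1) h2 hpC)
      · exact h
    -- final Fourier argument
    intro s₀ hs₀ s₁ hs₁ hne hmod
    have ht : (g s₀).val = (g s₁).val := by
      rw [hgval, hgval, ZMod.val_natCast, ZMod.val_natCast]
      exact hmod
    set ζ : ℂ := Complex.exp (2 * Real.pi * Complex.I / N) with hζdef
    have hprim : IsPrimitiveRoot ζ N := Complex.isPrimitiveRoot_exp N hNpos.ne'
    have hζN : ζ ^ N = 1 := hprim.pow_eq_one
    set t := (g s₀).val with htdef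
    have htlt : t < N := ZMod.val_lt _
    have hE1 : ∑ k ∈ Finset.range N, ∑ s ∈ S₀, ζ ^ (k * (g s).val + k * (N - t)) = (N : ℂ) := by
      rw [Finset.sum_eq_single_of_mem 0 (Finset.mem_range.mpr hNpos)]
      · simp [hS₀card]
      · intro k hk hk0
        have hk' : 0 < k := Nat.pos_of_ne_zero hk0
        have hkN : k < N := Finset.mem_range.mp hk
        have hζk1 : ζ ^ k ≠ 1 := hprim.pow_ne_one_of_pos_of_lt hk0 hkN
        have hζkN : (ζ ^ k) ^ N = 1 := by rw [← pow_mul, mul_comm, pow_mul, hζN, one_pow]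
        have : ∑ s ∈ S₀, ζ ^ (k * (g s).val + k * (N - t))
            = (∑ s ∈ S₀, (ζ ^ k) ^ (g s).val) * ζ ^ (k * (N - t)) := by
          rw [Finset.sum_mul]
          refine Finset.sum_congr rfl fun s _ => ?_
          rw [pow_add, pow_mul]
        rw [this, hkey (ζ ^ k) hζkN hζk1, zero_mul]
    have hE2 : ∑ k ∈ Finset.range N, ∑ s ∈ S₀, ζ ^ (k * (g s).val + k * (N - t))
        = ((S₀.filter (fun s => (g s).val = t)).card : ℂ) * N := by
      rw [Finset.sum_comm]
      have hterm : ∀ s ∈ S₀, ∑ k ∈ Finset.range N, ζ ^ (k * (g s).val + k * (N - t))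
          = if (g s).val = t then (N : ℂ) else 0 := by
        intro s _
        have hexp : ∀ k, k * (g s).val + k * (N - t) = ((g s).val + (N - t)) * k := by
          intro k; ring
        have hw : ∀ k, ζ ^ (k * (g s).val + k * (N - t)) = (ζ ^ ((g s).val + (N - t))) ^ k := by
          intro k; rw [hexp, pow_mul]
        simp only [hw]
        by_cases hst : (g s).val = t
        · have : (g s).val + (N - t) = N := by omega
          rw [this, hζN]
          simp [hst]
        · have hwN : (ζ ^ ((g s).val + (N - t))) ^ N = 1 := by
            rw [← pow_mul, mul_comm, pow_mul, hζN, one_pow]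
          have hw1 : ζ ^ ((g s).val + (N - t)) ≠ 1 := by
            intro h1
            have hdvd' : N ∣ (g s).val + (N - t) := (hprim.pow_eq_one_iff_dvd _).mp h1
            obtain ⟨c, hc⟩ := hdvd'
            have hlt : (g s).val < N := ZMod.val_lt _
            have hc2 : c < 2 := by
              by_contra hcge
              push_neg at hcge
              have : N * 2 ≤ N * c := Nat.mul_le_mul_left N hcge
              omega
            match c, hc2 with
            | 0, _ => omega
            | 1, _ => rw [mul_one] at hc; omega
          rw [aux_geom N _ hwN hw1]
          simp [hst]
      rw [Finset.sum_congr rfl hterm, ← Finset.sum_filter, Finset.sum_const, nsmul_eq_mul]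
    have hcard2 : 2 ≤ (S₀.filter (fun s => (g s).val = t)).card := by
      apply Finset.one_lt_card.mpr
      exact ⟨s₀, Finset.mem_filter.mpr ⟨hs₀, rfl⟩, s₁, Finset.mem_filter.mpr ⟨hs₁, ht.symm⟩, hne⟩
    rw [hE1] at hE2
    have hNC : (N : ℂ) ≠ 0 := Nat.cast_ne_zero.mpr hNpos.ne'
    have h1 : ((S₀.filter (fun s => (g s).val = t)).card : ℂ) * (N : ℂ) = 1 * (N : ℂ) := by
      rw [one_mul]; exact hE2.symm
    have h2 := mul_right_cancel₀ hNC h1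
    have h3 : (S₀.filter (fun s => (g s).val = t)).card = 1 := by exact_mod_cast h2
    omega
  · -- backward direction
    intro hdist
    have hginj : ∀ s ∈ S₀, ∀ s' ∈ S₀, g s = g s' → s = s' := by
      intro s hs s' hs' hgs
      by_contra hne
      apply hdist s hs s' hs' hne
      have h' : ((s.val : ℕ) : ZMod N) = ((s'.val : ℕ) : ZMod N) := by
        rw [← hgval, ← hgval, hgs]
      exact (ZMod.natCast_eq_natCast_iff _ _ _).mp h'
    have hsurj : ∀ x : ZMod N, ∃ s ∈ S₀, g s = x := by
      have himg : S₀.image g = Finset.univ := by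
        apply Finset.eq_univ_of_card
        rw [Finset.card_image_of_injOn (fun s hs s' hs' => hginj s hs s' hs'), hS₀card, ZMod.card]
      intro x
      have hx : x ∈ S₀.image g := himg ▸ Finset.mem_univ x
      obtain ⟨s, hs, hgs⟩ := Finset.mem_image.mp hx
      exact ⟨s, hs, hgs⟩
    refine ⟨{v : ZMod n | g v = 0}, ?_, ?_⟩
    · intro u hu v hv hadj
      obtain ⟨hne, hvu⟩ := (hAdj u v).mp hadj
      have hmem : v - u ∈ S₀ := Finset.mem_insert_of_mem hvu
      have h0 : v - u = 0 := by
        apply hginj _ hmem _ h0S₀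
        rw [map_sub, show g v = 0 from hv, show g u = 0 from hu, sub_zero, map_zero]
      exact hne (sub_eq_zero.mp h0).symm
    · intro v hv
      have hv0 : g v ≠ 0 := hv
      obtain ⟨s, hsS₀, hgs⟩ := hsurj (g v)
      have hs0 : s ≠ 0 := by rintro rfl; rw [map_zero] at hgs; exact hv0 hgs.symm
      have hsS : s ∈ S := hmemS hsS₀ hs0
      refine ⟨v - s, ⟨?_, ?_⟩, ?_⟩
      · show g (v - s) = 0
        rw [map_sub, hgs, sub_self]
      · refine (hAdj v (v - s)).mpr ⟨?_, ?_⟩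
        · intro h
          exact hs0 (by linear_combination h)
        · have : v - s - v = -s := by ring
          rw [this]; exact hSneg _ hsS
      · rintro c' ⟨hc'0, hadj'⟩
        obtain ⟨hne', hmem'⟩ := (hAdj v c').mp hadj'
        have hvc' : v - c' ∈ S := by have := hSneg _ hmem'; rwa [neg_sub] at this
        have heq : v - c' = s := by
          apply hginj _ (Finset.mem_insert_of_mem hvc') _ hsS₀
          rw [map_sub, show g c' = 0 from hc'0, sub_zero, hgs]
        linear_combination -heq
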